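/- For every EL-chart A, the type of A lies in P_{m,n,d}, i.e. the type μ' = (μ'_{τ,i}) satisfies μ'_{τ,i} ≥ 0 for all τ, i, and Σ_{i=1}^k Σ_{τ=1}^d μ'_{τ,i} ≤ km/n for every k = 1,…,n, with equality for k = n. -/
import Mathlib


namespace ELChart

/-- An EL-chart (for parameters `d`, `n` and `mfun τ = m_τ`): a non-empty subset
`A ⊆ ℤ^(d) = (ℤ/dℤ) × ℤ` which is bounded below and satisfies `f(A) ⊆ A` and `A + n ⊆ A`,
where `f (τ, x) = (τ + 1, x + m_τ)`. -/
def IsChart (d n : ℕ) (mfun : ZMod d → ℤ) (A : Set (ZMod d × ℤ)) : Prop :=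
  A.Nonempty ∧ (∃ c : ℤ, ∀ p ∈ A, c ≤ p.2) ∧
    (∀ p ∈ A, ((p.1 + 1 : ZMod d), p.2 + mfun p.1) ∈ A) ∧
    (∀ p ∈ A, (p.1, p.2 + (n : ℤ)) ∈ A)

/-- `B = A ∖ (A + n)`. -/
def Bset (d n : ℕ) (A : Set (ZMod d × ℤ)) : Set (ZMod d × ℤ) :=
  {p | p ∈ A ∧ (p.1, p.2 - (n : ℤ)) ∉ A}

/-- The shift `A + z` of a subset of `ℤ^(d)`. -/
def shift (d : ℕ) (A : Set (ZMod d × ℤ)) (z : ℤ) : Set (ZMod d × ℤ) :=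
  (fun p : ZMod d × ℤ => (p.1, p.2 + z)) '' A

/-- Two EL-charts are equivalent if they differ by a shift. -/
def ChartEquiv (d : ℕ) (A A' : Set (ZMod d × ℤ)) : Prop :=
  ∃ z : ℤ, shift d A z = A'

/-- The sequence `b 0, b 1, …` associated with an EL-chart: `b 0 = min B_(0)` and `b (i+1)`
is the unique element of `B` of the form `f (b i) − c * n` with `c` a non-negative integer. -/
noncomputable def bseq (d n : ℕ) (mfun : ZMod d → ℤ) (A : Set (ZMod d × ℤ)) :
    ℕ → ZMod d × ℤ
  | 0 => ((0 : ZMod d), sInf {x : ℤ | ((0 : ZMod d), x) ∈ Bset d n A})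
  | i + 1 =>
    ((bseq d n mfun A i).1 + 1,
      sInf {y : ℤ | ((bseq d n mfun A i).1 + 1, y) ∈ Bset d n A ∧
        ((bseq d n mfun A i).2 + mfun (bseq d n mfun A i).1 - y) % (n : ℤ) = 0 ∧
        y ≤ (bseq d n mfun A i).2 + mfun (bseq d n mfun A i).1})

/-- The entry `μ'_k` (for `1 ≤ k ≤ d*n`) of the type of an EL-chart: the non-negative integer
with `b k = f (b (k-1)) − μ'_k * n`. -/
noncomputable def typeInt (d n : ℕ) (mfun : ZMod d → ℤ) (A : Set (ZMod d × ℤ)) (k : ℕ) : ℤ :=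
  ((bseq d n mfun A (k - 1)).2 + mfun (bseq d n mfun A (k - 1)).1
    - (bseq d n mfun A k).2) / (n : ℤ)

/-- The type of an EL-chart as a tuple: `μ'_{τ,i} = μ'_{τ + (i−1)d}` where the `Fin d`-index
`τ` corresponds to `τ + 1 ∈ {1, …, d}` and the `Fin n`-index `i` to `i + 1 ∈ {1, …, n}`. -/
noncomputable def typeTup (d n : ℕ) (mfun : ZMod d → ℤ) (A : Set (ZMod d × ℤ)) :
    Fin d → Fin n → ℤ :=
  fun τ i => typeInt d n mfun A (τ.val + 1 + i.val * d)

/-- The entry `μ'_{τ',i'}` of the type of an EL-chart attached to an element `p = b_{τ',i'}`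
of `B`: if `q ∈ B` is the (unique) predecessor of `p`, i.e. the element with
`p = f q − c * n` for a non-negative integer `c`, then `muOf p = c`. -/
noncomputable def muOf (d n : ℕ) (mfun : ZMod d → ℤ) (A : Set (ZMod d × ℤ))
    (p : ZMod d × ℤ) : ℤ :=
  (sInf {y : ℤ | ((p.1 - 1 : ZMod d), y) ∈ Bset d n A ∧
      (y + mfun (p.1 - 1) - p.2) % (n : ℤ) = 0 ∧ p.2 ≤ y + mfun (p.1 - 1)}
    + mfun (p.1 - 1) - p.2) / (n : ℤ)

/-- The `i`-th largest element `b̃_{τ,i}` of `B_(τ)` (1-indexed: `i ∈ {1, …, n}`): the unique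
element of `B_(τ)` with exactly `i − 1` elements of `B_(τ)` above it. -/
noncomputable def btilde (d n : ℕ) (A : Set (ZMod d × ℤ)) (τ : ZMod d) (i : ℕ) : ℤ :=
  sInf {y : ℤ | (τ, y) ∈ Bset d n A ∧
    Set.ncard {z : ℤ | (τ, z) ∈ Bset d n A ∧ y < z} = i - 1}

/-- The cotype of an EL-chart as a tuple: `μ̃_{τ,i} = μ'_{τ',i'}` where `b̃_{τ,i} = b_{τ',i'}`,
i.e. the type entry attached to the `i`-th largest element of `B_(τ)`. -/
noncomputable def cotypeTup (d n : ℕ) (mfun : ZMod d → ℤ) (A : Set (ZMod d × ℤ)) :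
    Fin d → Fin n → ℤ :=
  fun τ i =>
    muOf d n mfun A (((τ.val + 1 : ℕ) : ZMod d),
      btilde d n A ((τ.val + 1 : ℕ) : ZMod d) (i.val + 1))

/-- Membership in `P_{m,n,d}`: all entries are non-negative and
`Σ_{i=1}^k Σ_{τ=1}^d μ_{τ,i} ≤ k*m/n` for `k = 1, …, n`, with equality for `k = n`. -/
def memP (d n m : ℕ) (μ : Fin d → Fin n → ℤ) : Prop :=
  (∀ τ i, 0 ≤ μ τ i) ∧
    (∀ k : ℕ, 1 ≤ k → k ≤ n →
      (n : ℤ) * ∑ τ : Fin d, ∑ i : Fin n, (if i.val + 1 ≤ k then μ τ i else 0)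
        ≤ (k : ℤ) * (m : ℤ)) ∧
    (∑ τ : Fin d, ∑ i : Fin n, μ τ i) = (m : ℤ)

/-- An EL-chart is normalised if `Σ_{b ∈ B_(0)} |b| = n(n−1)/2`. -/
def IsNormalised (d n : ℕ) (A : Set (ZMod d × ℤ)) : Prop :=
  ∑ᶠ x ∈ {x : ℤ | ((0 : ZMod d), x) ∈ Bset d n A}, x = ((n * (n - 1) / 2 : ℕ) : ℤ)

/-- The dominant rearrangement of a tuple: each component is sorted weakly decreasingly. -/
def domOf (d n : ℕ) (μ : Fin d → Fin n → ℤ) : Fin d → Fin n → ℤ :=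
  fun τ i => μ τ (Tuple.sort (fun j => -(μ τ j)) i)

/-- A tuple is dominant if each of its `d` components is weakly decreasing. -/
def IsDom (d n : ℕ) (μ : Fin d → Fin n → ℤ) : Prop :=
  ∀ τ : Fin d, ∀ i j : Fin n, i ≤ j → μ τ j ≤ μ τ i

end ELChart

open ELChart


section MyAux
variable {d n m : ℕ} {mfun : ZMod d → ℤ} {A : Set (ZMod d × ℤ)}

lemma my_chart_addmul (hA : IsChart d n mfun A) (k : ℕ) :
    ∀ p ∈ A, (p.1, p.2 + (k : ℤ) * n) ∈ A := by
  induction k with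
  | zero => simpa using fun p hp => hp
  | succ k ih =>
      intro p hp
      have h := hA.2.2.2 _ (ih p hp)
      convert h using 2
      push_cast; ring

lemma my_chart_up (hA : IsChart d n mfun A) (hn : 0 < n) {τ : ZMod d} {x y : ℤ}
    (hx : (τ, x) ∈ A) (hd : (n : ℤ) ∣ y - x) (hxy : x ≤ y) : (τ, y) ∈ A := by
  obtain ⟨c, hc⟩ := hd
  have hn' : (0:ℤ) < n := by exact_mod_cast hn
  have hc0 : 0 ≤ c := by nlinarith
  have h := my_chart_addmul hA c.toNat (τ, x) hx
  have : x + (c.toNat : ℤ) * n = y := by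
    rw [Int.toNat_of_nonneg hc0]; linarith
  rwa [this] at h

lemma my_B_unique (hA : IsChart d n mfun A) (hn : 0 < n) {τ : ZMod d} {y y' : ℤ}
    (hy : (τ, y) ∈ Bset d n A) (hy' : (τ, y') ∈ Bset d n A)
    (hd : (n : ℤ) ∣ y - y') : y = y' := by
  have key : ∀ a b : ℤ, (τ, a) ∈ Bset d n A → (τ, b) ∈ Bset d n A →
      (n : ℤ) ∣ a - b → ¬ b < a := by
    intro a b ha hb hdvd hlt
    apply ha.2
    have hnab : (n : ℤ) ≤ a - b := Int.le_of_dvd (by omega) hdvd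
    refine my_chart_up hA hn hb.1 ?_ (by omega)
    obtain ⟨c, hc⟩ := hdvd
    exact ⟨c - 1, by linarith [hc]⟩
  have h1 := key y y' hy hy' hd
  have h2 := key y' y hy' hy (by rw [show y' - y = -(y - y') by ring]; exact hd.neg_right)
  omega

lemma my_class_min (hA : IsChart d n mfun A) (hn : 0 < n) {τ : ZMod d} {t : ℤ}
    (ht : (τ, t) ∈ A) :
    ∃ g, (τ, g) ∈ Bset d n A ∧ (n : ℤ) ∣ t - g ∧ g ≤ t := by
  set C := {x : ℤ | (τ, x) ∈ A ∧ (n : ℤ) ∣ t - x} with hC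
  have htC : t ∈ C := ⟨ht, by simp⟩
  have hne : C.Nonempty := ⟨t, htC⟩
  obtain ⟨c, hc⟩ := hA.2.1
  have hbdd : BddBelow C := ⟨c, fun x hx => hc _ hx.1⟩
  have hmem : sInf C ∈ C := Int.csInf_mem hne hbdd
  refine ⟨sInf C, ⟨hmem.1, ?_⟩, hmem.2, csInf_le hbdd htC⟩
  intro hbad
  have hmem2 : sInf C - n ∈ C := by
    refine ⟨hbad, ?_⟩
    obtain ⟨c', hc'⟩ := hmem.2
    exact ⟨c' + 1, by linarith⟩
  have := csInf_le hbdd hmem2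
  omega

lemma my_sInf_step (hA : IsChart d n mfun A) (hn : 0 < n) {τ' : ZMod d} {t : ℤ}
    (ht : (τ', t) ∈ A) :
    (τ', sInf {y : ℤ | (τ', y) ∈ Bset d n A ∧ (t - y) % (n : ℤ) = 0 ∧ y ≤ t}) ∈ Bset d n A ∧
    (n : ℤ) ∣ t - sInf {y : ℤ | (τ', y) ∈ Bset d n A ∧ (t - y) % (n : ℤ) = 0 ∧ y ≤ t} ∧
    sInf {y : ℤ | (τ', y) ∈ Bset d n A ∧ (t - y) % (n : ℤ) = 0 ∧ y ≤ t} ≤ t := by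
  obtain ⟨g0, hg0B, hg0d, hg0le⟩ := my_class_min hA hn ht
  have hset : {y : ℤ | (τ', y) ∈ Bset d n A ∧ (t - y) % (n : ℤ) = 0 ∧ y ≤ t} = {g0} := by
    ext y
    simp only [Set.mem_setOf_eq, Set.mem_singleton_iff]
    constructor
    · rintro ⟨hyB, hymod, hyle⟩
      have h1 : (n : ℤ) ∣ t - y := Int.dvd_of_emod_eq_zero hymod
      have h2 : (n : ℤ) ∣ y - g0 := by
        have := hg0d.sub h1
        rwa [show t - g0 - (t - y) = y - g0 by ring] at this
      exact my_B_unique hA hn hyB hg0B h2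
    · rintro rfl
      exact ⟨hg0B, Int.emod_eq_zero_of_dvd hg0d, hg0le⟩
  rw [hset, csInf_singleton]
  exact ⟨hg0B, hg0d, hg0le⟩

lemma my_col_nonempty [NeZero d] (hA : IsChart d n mfun A) (τ : ZMod d) :
    ∃ x, (τ, x) ∈ A := by
  obtain ⟨⟨σ, x⟩, hp⟩ := hA.1
  have iter : ∀ j : ℕ, ∃ y, ((σ + (j : ZMod d), y) ∈ A) := by
    intro j
    induction j with
    | zero => exact ⟨x, by simpa using hp⟩
    | succ j ih =>
        obtain ⟨y, hy⟩ := ih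
        refine ⟨y + mfun (σ + (j : ZMod d)), ?_⟩
        have h := hA.2.2.1 _ hy
        convert h using 2
        push_cast; ring
  obtain ⟨y, hy⟩ := iter (τ - σ).val
  refine ⟨y, ?_⟩
  rwa [ZMod.natCast_rightInverse (τ - σ), add_sub_cancel] at hy

lemma my_bseq_mem [NeZero d] (hA : IsChart d n mfun A) (hn : 0 < n) (k : ℕ) :
    bseq d n mfun A k ∈ Bset d n A ∧ (bseq d n mfun A k).1 = (k : ZMod d) := by
  induction k with
  | zero =>
      obtain ⟨t, ht⟩ := my_col_nonempty hA (0 : ZMod d)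
      obtain ⟨g0, hg0B, _, _⟩ := my_class_min hA hn ht
      have hne : {x : ℤ | ((0 : ZMod d), x) ∈ Bset d n A}.Nonempty := ⟨g0, hg0B⟩
      obtain ⟨c, hc⟩ := hA.2.1
      have hbdd : BddBelow {x : ℤ | ((0 : ZMod d), x) ∈ Bset d n A} :=
        ⟨c, fun x hx => hc _ hx.1⟩
      have hmem := Int.csInf_mem hne hbdd
      exact ⟨hmem, by simp [bseq]⟩
  | succ k ih =>
      have hAk : bseq d n mfun A k ∈ A := ih.1.1
      have ht := hA.2.2.1 _ hAk
      have hstep := my_sInf_step hA hn ht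
      constructor
      · have : bseq d n mfun A (k + 1) =
            ((bseq d n mfun A k).1 + 1,
              sInf {y : ℤ | ((bseq d n mfun A k).1 + 1, y) ∈ Bset d n A ∧
                ((bseq d n mfun A k).2 + mfun (bseq d n mfun A k).1 - y) % (n : ℤ) = 0 ∧
                y ≤ (bseq d n mfun A k).2 + mfun (bseq d n mfun A k).1}) := rfl
        rw [this]
        exact hstep.1
      · show (bseq d n mfun A k).1 + 1 = ((k + 1 : ℕ) : ZMod d)
        rw [ih.2]; push_cast; ring

lemma my_bseq_step [NeZero d] (hA : IsChart d n mfun A) (hn : 0 < n) (k : ℕ) :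
    (n : ℤ) ∣ (bseq d n mfun A k).2 + mfun (bseq d n mfun A k).1 - (bseq d n mfun A (k+1)).2 ∧
    (bseq d n mfun A (k+1)).2 ≤ (bseq d n mfun A k).2 + mfun (bseq d n mfun A k).1 := by
  have hAk : bseq d n mfun A k ∈ A := (my_bseq_mem hA hn k).1.1
  have ht := hA.2.2.1 _ hAk
  have hstep := my_sInf_step hA hn ht
  exact ⟨hstep.2.1, hstep.2.2⟩

lemma my_typeInt_spec [NeZero d] (hA : IsChart d n mfun A) (hn : 0 < n) (k : ℕ) :
    0 ≤ typeInt d n mfun A (k + 1) ∧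
    (n : ℤ) * typeInt d n mfun A (k + 1)
      = (bseq d n mfun A k).2 + mfun (bseq d n mfun A k).1 - (bseq d n mfun A (k+1)).2 := by
  obtain ⟨hd, hle⟩ := my_bseq_step hA hn k
  have hidx : typeInt d n mfun A (k + 1)
      = ((bseq d n mfun A k).2 + mfun (bseq d n mfun A k).1 - (bseq d n mfun A (k+1)).2)
        / (n : ℤ) := by
    simp [typeInt]
  rw [hidx]
  constructor
  · exact Int.ediv_nonneg (by omega) (by positivity)
  · exact Int.mul_ediv_cancel' hd

lemma my_telescope [NeZero d] (hA : IsChart d n mfun A) (hn : 0 < n) (K : ℕ) :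
    (n : ℤ) * (∑ j ∈ Finset.range K, typeInt d n mfun A (j + 1))
      = (bseq d n mfun A 0).2 + (∑ j ∈ Finset.range K, mfun ((j : ℕ) : ZMod d))
        - (bseq d n mfun A K).2 := by
  induction K with
  | zero => simp
  | succ K ih =>
      rw [Finset.sum_range_succ, Finset.sum_range_succ, mul_add, ih]
      have h := (my_typeInt_spec hA hn K).2
      rw [(my_bseq_mem hA hn K).2] at h
      linarith

lemma my_range_zmod_sum [NeZero d] (f : ZMod d → ℤ) :
    ∑ j ∈ Finset.range d, f ((j : ℕ) : ZMod d) = ∑ τ : ZMod d, f τ := by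
  refine Finset.sum_nbij' (fun j => ((j : ℕ) : ZMod d)) (fun τ => τ.val) ?_ ?_ ?_ ?_ ?_
  · intro a _; exact Finset.mem_univ _
  · intro a _; exact Finset.mem_range.mpr (ZMod.val_lt a)
  · intro a ha; exact ZMod.val_cast_of_lt (Finset.mem_range.mp ha)
  · intro a _; exact ZMod.natCast_rightInverse a
  · intro a _; rfl

lemma my_mfun_cycle [NeZero d] (hsum : ∑ τ : ZMod d, mfun τ = (m : ℤ)) (k : ℕ) :
    ∑ j ∈ Finset.range (k * d), mfun ((j : ℕ) : ZMod d) = (k : ℤ) * m := by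
  induction k with
  | zero => simp
  | succ k ih =>
      rw [show (k + 1) * d = k * d + d by ring, Finset.sum_range_add, ih]
      have h2 : ∑ j ∈ Finset.range d, mfun ((k * d + j : ℕ) : ZMod d)
          = ∑ j ∈ Finset.range d, mfun ((j : ℕ) : ZMod d) := by
        refine Finset.sum_congr rfl fun j _ => ?_
        congr 1
        push_cast [ZMod.natCast_self]
        ring
      rw [h2, my_range_zmod_sum, hsum]
      push_cast; ring

lemma my_block_sum (F : ℕ → ℤ) (k : ℕ) :
    ∑ i ∈ Finset.range k, ∑ τ ∈ Finset.range d, F (τ + 1 + i * d)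
      = ∑ j ∈ Finset.range (k * d), F (j + 1) := by
  induction k with
  | zero => simp
  | succ k ih =>
      rw [Finset.sum_range_succ, ih, show (k + 1) * d = k * d + d by ring,
        Finset.sum_range_add]
      congr 1
      refine Finset.sum_congr rfl fun τ _ => ?_
      congr 1
      omega

lemma my_reindex {k : ℕ} (hk : k ≤ n) (F : ℕ → ℤ) :
    ∑ τ : Fin d, ∑ i : Fin n, (if i.val + 1 ≤ k then F (τ.val + 1 + i.val * d) else 0)
      = ∑ j ∈ Finset.range (k * d), F (j + 1) := by
  rw [Finset.sum_comm]
  have h1 : ∀ i : Fin n, ∑ τ : Fin d, (if i.val + 1 ≤ k then F (τ.val + 1 + i.val * d) else 0)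
      = if i.val + 1 ≤ k then ∑ τ ∈ Finset.range d, F (τ + 1 + i.val * d) else 0 := by
    intro i
    split_ifs with h
    · exact Fin.sum_univ_eq_sum_range (fun t => F (t + 1 + i.val * d)) d
    · simp
  rw [Finset.sum_congr rfl fun i _ => h1 i,
    Fin.sum_univ_eq_sum_range
      (fun i => if i + 1 ≤ k then ∑ τ ∈ Finset.range d, F (τ + 1 + i * d) else 0) n,
    ← Finset.sum_subset (Finset.range_subset_range.mpr hk)
      (fun x _ hx => by rw [if_neg (by simp at hx; omega)]),
    ← my_block_sum]
  refine Finset.sum_congr rfl fun i hi => ?_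
  rw [if_pos (by simp at hi; omega)]

lemma my_b0_le [NeZero d] (hA : IsChart d n mfun A) {x : ℤ}
    (hx : ((0 : ZMod d), x) ∈ Bset d n A) : (bseq d n mfun A 0).2 ≤ x := by
  obtain ⟨c, hc⟩ := hA.2.1
  have hbdd : BddBelow {x : ℤ | ((0 : ZMod d), x) ∈ Bset d n A} :=
    ⟨c, fun x hx => hc _ hx.1⟩
  exact csInf_le hbdd hx

lemma my_bkd_col0 [NeZero d] (hA : IsChart d n mfun A) (hn : 0 < n) (k : ℕ) :
    ((0 : ZMod d), (bseq d n mfun A (k * d)).2) ∈ Bset d n A := by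
  have h := (my_bseq_mem hA hn (k * d)).1
  have hc := (my_bseq_mem hA hn (k * d)).2
  have h0 : ((k * d : ℕ) : ZMod d) = 0 := by
    push_cast [ZMod.natCast_self]; ring
  rw [h0] at hc
  rw [← hc]
  simpa using h

end MyAux

/-- For every EL-chart `A`, the type of `A` lies in `P_{m,n,d}`: the type
`μ' = (μ'_{τ,i})` satisfies `μ'_{τ,i} ≥ 0` for all `τ, i`, and
`Σ_{i=1}^k Σ_{τ=1}^d μ'_{τ,i} ≤ k*m/n` for every `k = 1, …, n`, with equality for `k = n`. -/
theorem type_mem_P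
    (d n m : ℕ) [NeZero d] (hn : 0 < n) (hm : 0 < m) (hmn : Nat.Coprime m n)
    (mfun : ZMod d → ℤ) (hsum : ∑ τ : ZMod d, mfun τ = (m : ℤ))
    (A : Set (ZMod d × ℤ)) (hA : IsChart d n mfun A) :
    memP d n m (typeTup d n mfun A) := by
  refine ⟨?_, ?_, ?_⟩
  · intro τ i
    have h := (my_typeInt_spec hA hn (τ.val + i.val * d)).1
    have hidx : τ.val + 1 + i.val * d = (τ.val + i.val * d) + 1 := by omega
    simpa [typeTup, hidx] using h
  · intro k hk1 hkn
    have hre := my_reindex (d := d) hkn (typeInt d n mfun A)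
    simp only [typeTup]
    rw [hre, my_telescope hA hn (k * d), my_mfun_cycle hsum k]
    have hle := my_b0_le hA (my_bkd_col0 hA hn k)
    linarith
  · have hite : ∑ τ : Fin d, ∑ i : Fin n, typeTup d n mfun A τ i
        = ∑ τ : Fin d, ∑ i : Fin n,
            (if i.val + 1 ≤ n then typeInt d n mfun A (τ.val + 1 + i.val * d) else 0) := by
      refine Finset.sum_congr rfl fun τ _ => Finset.sum_congr rfl fun i _ => ?_
      rw [if_pos (by omega)]
      rfl
    rw [hite, my_reindex (le_refl n) (typeInt d n mfun A)]
    have htel := my_telescope hA hn (n * d)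
    have hcyc := my_mfun_cycle hsum n
    rw [hcyc] at htel
    -- b_{nd} = b_0 in column 0
    have hb0 : ((0 : ZMod d), (bseq d n mfun A 0).2) ∈ Bset d n A := by
      have h := (my_bseq_mem hA hn 0).1
      have hc := (my_bseq_mem hA hn 0).2
      simp only [Nat.cast_zero] at hc
      rw [← hc]
      simpa using h
    have hbnd := my_bkd_col0 hA hn n
    have hdvd : (n : ℤ) ∣ (bseq d n mfun A 0).2 - (bseq d n mfun A (n * d)).2 := by
      refine ⟨(∑ j ∈ Finset.range (n * d), typeInt d n mfun A (j + 1)) - m, ?_⟩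
      linarith
    have heq := my_B_unique hA hn hb0 hbnd hdvd
    have hnz : (n : ℤ) ≠ 0 := by exact_mod_cast hn.ne'
    have : (n : ℤ) * (∑ j ∈ Finset.range (n * d), typeInt d n mfun A (j + 1))
        = (n : ℤ) * m := by
      rw [htel, heq]; ring
    exact mul_left_cancel₀ hnz this
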